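/- Let $f$ be $\mu$-strongly convex and $\tilde L$-smooth with minimizer $w^*$, and $g(w)$ satisfy $\|g(w) - \nabla f(w)\| \leq \delta \|\nabla f(w)\|$ with $\delta\tilde L < \mu$. For the biased gradient step $w' = w - \eta g(w)$, $\|w' - w^*\|^2 \leq \big(1 - 2(\mu - \delta\tilde L)\eta + (1+\delta)^2\tilde L^2\eta^2\big)\|w - w^*\|^2$. -/

import Mathlib

open InnerProductSpace

local notation "⟪" x ", " y "⟫" => @inner ℝ _ _ x y

/-- gradient of μ/2 ‖x‖² is μ • x. -/
lemma hasGradientAt_half_norm_sq {E : Type*} [NormedAddCommGroup E] [InnerProductSpace ℝ E]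
    [CompleteSpace E] (μ : ℝ) (x : E) :
    HasGradientAt (fun y => μ / 2 * ‖y‖ ^ 2) (μ • x) x := by
  rw [hasGradientAt_iff_hasFDerivAt]
  have h1 : HasFDerivAt (fun y : E => ⟪y, y⟫) (fderivInnerCLM ℝ (x, x) ∘L ((ContinuousLinearMap.id ℝ E).prod (ContinuousLinearMap.id ℝ E))) x :=
    (hasFDerivAt_id x).inner ℝ (hasFDerivAt_id x)
  have h2 : HasFDerivAt (fun y : E => μ / 2 * ⟪y, y⟫)
      ((μ/2) • (fderivInnerCLM ℝ (x, x) ∘L ((ContinuousLinearMap.id ℝ E).prod (ContinuousLinearMap.id ℝ E)))) x :=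
    h1.const_mul (μ/2)
  have heq : (fun y : E => μ / 2 * ⟪y, y⟫) = fun y => μ / 2 * ‖y‖ ^ 2 := by
    funext y; rw [real_inner_self_eq_norm_sq]
  rw [heq] at h2
  refine h2.congr_fderiv ?_
  ext v
  simp [fderivInnerCLM, real_inner_smul_left, real_inner_comm x v]
  ring

lemma grad_mono {E : Type*} [NormedAddCommGroup E] [InnerProductSpace ℝ E] [CompleteSpace E]
    (h : E → ℝ) (hconv : ConvexOn ℝ Set.univ h) (hd : Differentiable ℝ h) (x y : E) :
    ⟪gradient h x, y - x⟫ ≤ ⟪gradient h y, y - x⟫ := by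
  set c : ℝ → E := fun t => x + t • (y - x) with hc
  have hder : ∀ t : ℝ, HasDerivAt (fun t => h (c t)) ⟪gradient h (c t), y - x⟫ t := by
    intro t
    have hcder : HasDerivAt c (y - x) t := by
      have : HasDerivAt (fun t : ℝ => t • (y - x)) ((1:ℝ) • (y - x)) t := by
        simpa using (hasDerivAt_id t).smul_const (y - x)
      simpa only [one_smul] using this.const_add x
    have hf : HasFDerivAt h (toDual ℝ E (gradient h (c t))) (c t) :=
      (hasGradientAt_iff_hasFDerivAt).mp (hd (c t)).hasGradientAt
    have := hf.comp_hasDerivAt t hcder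
    simpa [Function.comp_def] using this
  have hφconv : ConvexOn ℝ Set.univ (fun t => h (c t)) := by
    have : ConvexOn ℝ (AffineMap.lineMap x y ⁻¹' Set.univ) (h ∘ (AffineMap.lineMap x y : ℝ →ᵃ[ℝ] E)) :=
      hconv.comp_affineMap _
    have e : (h ∘ (AffineMap.lineMap x y : ℝ →ᵃ[ℝ] E)) = fun t => h (c t) := by
      funext t
      simp only [Function.comp, AffineMap.lineMap_apply_module, hc]
      congr 1
      module
    rwa [Set.preimage_univ, e] at this
  have hmono := hφconv.monotoneOn_deriv (fun t _ => (hder t).differentiableAt)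
  have h01 := hmono (Set.mem_univ (0:ℝ)) (Set.mem_univ (1:ℝ)) (by norm_num : (0:ℝ) ≤ 1)
  rw [(hder 0).deriv, (hder 1).deriv] at h01
  simpa [hc] using h01


/-- One step of biased gradient descent contracts the squared distance to the
minimizer (deterministic case with `ε = 0`). -/
theorem biased_gradient_step_contraction
    {d : ℕ} (f : EuclideanSpace ℝ (Fin d) → ℝ) (μ L δ : ℝ)
    (hsc : StrongConvexOn Set.univ μ f) (hdiff : Differentiable ℝ f)
    (hlip : ∀ x y, ‖gradient f x - gradient f y‖ ≤ L * ‖x - y‖)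
    (wstar : EuclideanSpace ℝ (Fin d)) (hmin : ∀ w, f wstar ≤ f w)
    (g : EuclideanSpace ℝ (Fin d) → EuclideanSpace ℝ (Fin d))
    (hδ : 0 ≤ δ) (hδL : δ * L < μ)
    (hbias : ∀ w, ‖g w - gradient f w‖ ≤ δ * ‖gradient f w‖)
    (η : ℝ) (hη : 0 ≤ η) :
    ∀ w, ‖w - η • g w - wstar‖ ^ 2 ≤
      (1 - 2 * (μ - δ * L) * η + (1 + δ) ^ 2 * L ^ 2 * η ^ 2) *
        ‖w - wstar‖ ^ 2 := by
  -- gradient vanishes at the minimizer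
  have hgrad0 : gradient f wstar = 0 := by
    have hloc : IsLocalMin f wstar := Filter.Eventually.of_forall hmin
    have hF0 : HasFDerivAt f (0 : EuclideanSpace ℝ (Fin d) →L[ℝ] ℝ) wstar := by
      have h0 := (hdiff wstar).hasFDerivAt
      rwa [hloc.fderiv_eq_zero] at h0
    have : HasGradientAt f 0 wstar := by
      rw [hasGradientAt_iff_hasFDerivAt, map_zero]; exact hF0
    exact this.gradient
  -- the shifted function is convex
  set h : EuclideanSpace ℝ (Fin d) → ℝ := fun x => f x - μ / 2 * ‖x‖ ^ 2 with hh
  have hconv : ConvexOn ℝ Set.univ h := strongConvexOn_iff_convex.mp hsc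
  have hgradh : ∀ x, HasGradientAt h (gradient f x - μ • x) x := by
    intro x
    rw [hasGradientAt_iff_hasFDerivAt, map_sub]
    exact ((hasGradientAt_iff_hasFDerivAt).mp (hdiff x).hasGradientAt).sub
      ((hasGradientAt_iff_hasFDerivAt).mp (hasGradientAt_half_norm_sq μ x))
  have hdh : Differentiable ℝ h := fun x =>
    ((hasGradientAt_iff_hasFDerivAt).mp (hgradh x)).differentiableAt
  -- strong monotonicity of the gradient
  have hkey : ∀ w, μ * ‖w - wstar‖ ^ 2 ≤ ⟪gradient f w, w - wstar⟫ := by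
    intro w
    have hmono := grad_mono h hconv hdh wstar w
    rw [(hgradh wstar).gradient, (hgradh w).gradient, hgrad0, zero_sub] at hmono
    simp only [inner_sub_left, inner_neg_left, real_inner_smul_left] at hmono
    have ew : ⟪w, w - wstar⟫ - ⟪wstar, w - wstar⟫ = ‖w - wstar‖ ^ 2 := by
      rw [← inner_sub_left, real_inner_self_eq_norm_sq]
    calc μ * ‖w - wstar‖ ^ 2
        = μ * ⟪w, w - wstar⟫ - μ * ⟪wstar, w - wstar⟫ := by rw [← ew]; ring
      _ ≤ ⟪gradient f w, w - wstar⟫ := by linarith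
  intro w
  set u := w - wstar with hu
  set G := g w with hG
  set F := gradient f w with hF
  have hFle : ‖F‖ ≤ L * ‖u‖ := by
    have := hlip w wstar
    rwa [hgrad0, sub_zero] at this
  have hGFle : ‖G - F‖ ≤ δ * ‖F‖ := hbias w
  have hGle : ‖G‖ ≤ (1 + δ) * ‖F‖ := by
    have : ‖G‖ ≤ ‖G - F‖ + ‖F‖ := by simpa using norm_add_le (G - F) F
    nlinarith
  have hinner : μ * ‖u‖ ^ 2 - δ * ‖F‖ * ‖u‖ ≤ ⟪G, u⟫ := by
    have hFG : F + (G - F) = G := by abel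
    have h1 : ⟪G, u⟫ = ⟪F, u⟫ + ⟪G - F, u⟫ := by rw [← inner_add_left, hFG]
    have h2 : |⟪G - F, u⟫| ≤ ‖G - F‖ * ‖u‖ := abs_real_inner_le_norm _ _
    have h3 := hkey w
    have h4 : ‖G - F‖ * ‖u‖ ≤ δ * ‖F‖ * ‖u‖ :=
      mul_le_mul_of_nonneg_right hGFle (norm_nonneg _)
    have h5 : -(δ * ‖F‖ * ‖u‖) ≤ ⟪G - F, u⟫ := by
      have := neg_abs_le ⟪G - F, u⟫; linarith
    linarith [h1, h3, h5]
  -- expand the square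
  have hexp : ‖w - η • G - wstar‖ ^ 2 = ‖u‖ ^ 2 - 2 * η * ⟪G, u⟫ + η ^ 2 * ‖G‖ ^ 2 := by
    have e1 : w - η • G - wstar = u - η • G := by rw [hu]; abel
    have e2 : ⟪u, G⟫ = ⟪G, u⟫ := real_inner_comm G u
    rw [e1, norm_sub_sq_real, real_inner_smul_right, norm_smul, mul_pow,
      Real.norm_eq_abs, sq_abs, e2]
    ring
  rw [hexp]
  have hGle2 : ‖G‖ ≤ (1 + δ) * (L * ‖u‖) :=
    hGle.trans (mul_le_mul_of_nonneg_left hFle (by linarith))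
  have hb1 : ‖G‖ ^ 2 ≤ (1 + δ) ^ 2 * L ^ 2 * ‖u‖ ^ 2 := by
    have := pow_le_pow_left₀ (norm_nonneg G) hGle2 2
    calc ‖G‖ ^ 2 ≤ ((1 + δ) * (L * ‖u‖)) ^ 2 := this
      _ = (1 + δ) ^ 2 * L ^ 2 * ‖u‖ ^ 2 := by ring
  have h6 : δ * (‖F‖ * ‖u‖) ≤ δ * (L * ‖u‖ * ‖u‖) :=
    mul_le_mul_of_nonneg_left (mul_le_mul_of_nonneg_right hFle (norm_nonneg u)) hδ
  have hb2 : (μ - δ * L) * ‖u‖ ^ 2 ≤ ⟪G, u⟫ := by nlinarith [hinner, h6]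
  nlinarith [mul_le_mul_of_nonneg_left hb2 hη, mul_le_mul_of_nonneg_left hb1 (sq_nonneg η)]
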